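/- Let H be an associative ℚ-algebra with elements 1_{(1,n)} for n ∈ ℤ satisfying, for all n, l ∈ ℤ: (n−l+2)(1_{(1,n−1)}1_{(1,l+1)} − 1_{(1,l−1)}1_{(1,n+1)}) = (n−l)(1_{(1,n)}1_{(1,l)} − 1_{(1,l−2)}1_{(1,n+2)}). Then every product 1_{(1,n₁)}⋯1_{(1,n_r)} is a ℚ-linear combination of ordered products 1_{(1,l₁)}⋯1_{(1,l_r)} with l₁ ≤ l₂ ≤ ⋯ ≤ l_r. -/

import Mathlib

/-- Position-weighted disorder potential: `psi t x = Σⱼ (x - tⱼ + 2j)⁺`. -/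
def strPsi : List ℤ → ℤ → ℕ
  | [], _ => 0
  | l :: s, x => (x - l).toNat + strPsi s (x + 2)

theorem strPsi_mono : ∀ (t : List ℤ) {x y : ℤ}, x ≤ y → strPsi t x ≤ strPsi t y
  | [], _, _, _ => le_rfl
  | l :: s, x, y, h => by
      simp only [strPsi]
      exact Nat.add_le_add (by omega) (strPsi_mono s (by omega))

theorem strOfFn_cast {α : Type*} (l : List α) {n : ℕ} (h : l.length = n) :
    List.ofFn (fun i : Fin n => l.get (Fin.cast h.symm i)) = l := by
  subst h; exact List.ofFn_get l

section Key

variable {H : Type*} [Ring H] [Algebra ℚ H] (a : ℤ → H)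

theorem str_triv (m : ℤ) (t : List ℤ) (ht : t.Pairwise (· ≤ ·)) (hm : ∀ b ∈ t, m ≤ b) :
    a m * (t.map a).prod ∈
      Submodule.span ℚ {y : H | ∃ u : List ℤ, u.Pairwise (· ≤ ·) ∧
        u.length = t.length + 1 ∧ (∀ x : ℤ, strPsi u x ≤ strPsi (m :: t) x) ∧
        y = (u.map a).prod} :=
  Submodule.subset_span ⟨m :: t, List.pairwise_cons.mpr ⟨hm, ht⟩, by simp,
    fun _ => le_rfl, by simp⟩

theorem str_key
    (hrel : ∀ n l : ℤ,
      ((n : ℚ) - l + 2) • (a (n - 1) * a (l + 1) - a (l - 1) * a (n + 1)) =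
        ((n : ℚ) - l) • (a n * a l - a (l - 2) * a (n + 2))) :
    ∀ (N : ℕ) (m : ℤ) (t : List ℤ), t.Pairwise (· ≤ ·) → strPsi t m ≤ N →
      a m * (t.map a).prod ∈
        Submodule.span ℚ {y : H | ∃ u : List ℤ, u.Pairwise (· ≤ ·) ∧
          u.length = t.length + 1 ∧ (∀ x : ℤ, strPsi u x ≤ strPsi (m :: t) x) ∧
          y = (u.map a).prod} := by
  intro N
  induction N with
  | zero =>
    intro m t ht hN
    rcases t with _ | ⟨l, s⟩
    · exact str_triv a m [] ht (by simp)
    · have hml : m ≤ l := by simp only [strPsi] at hN; omega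
      refine str_triv a m (l :: s) ht ?_
      intro b hb
      rcases List.mem_cons.mp hb with rfl | hb
      · exact hml
      · exact le_trans hml ((List.pairwise_cons.mp ht).1 b hb)
  | succ N IH =>
    intro m t ht hN
    rcases t with _ | ⟨l, s⟩
    · exact str_triv a m [] ht (by simp)
    by_cases hml : m ≤ l
    · refine str_triv a m (l :: s) ht ?_
      intro b hb
      rcases List.mem_cons.mp hb with rfl | hb
      · exact hml
      · exact le_trans hml ((List.pairwise_cons.mp ht).1 b hb)
    push_neg at hml
    have hs : s.Pairwise (· ≤ ·) := (List.pairwise_cons.mp ht).2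
    have hNs : (m - l).toNat + strPsi s (m + 2) ≤ N + 1 := by
      simpa only [strPsi] using hN
    -- the single-step rewriting identity
    have hne : ((m : ℚ) - (l : ℚ)) ≠ 0 := by
      have : (l : ℚ) < m := by exact_mod_cast hml
      exact sub_ne_zero.mpr this.ne'
    have h3 : a m * a l - a (l - 2) * a (m + 2) =
        (((m : ℚ) - l + 2) / ((m : ℚ) - l)) •
          (a (m - 1) * a (l + 1) - a (l - 1) * a (m + 1)) := by
      rw [div_eq_mul_inv, mul_comm ((m : ℚ) - ↑l + 2) (((m : ℚ) - ↑l)⁻¹), mul_smul,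
        hrel m l, inv_smul_smul₀ hne]
    have h2 : a m * a l = a (l - 2) * a (m + 2) +
        (((m : ℚ) - l + 2) / ((m : ℚ) - l)) •
          (a (m - 1) * a (l + 1) - a (l - 1) * a (m + 1)) := by
      rw [← h3]; abel
    have expand : a m * (a l * (List.map a s).prod) =
        a (l - 2) * (a (m + 2) * (List.map a s).prod) +
          (((m : ℚ) - l + 2) / ((m : ℚ) - l)) •
            (a (m - 1) * (a (l + 1) * (List.map a s).prod)) -
          (((m : ℚ) - l + 2) / ((m : ℚ) - l)) •
            (a (l - 1) * (a (m + 1) * (List.map a s).prod)) := by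
      rw [← mul_assoc, h2, add_mul, smul_mul_assoc, sub_mul, smul_sub]
      simp only [mul_assoc]
      abel
    have hpair : ∀ p q : ℤ, p + q = m + l → q ≤ m + 2 → l ≤ q → l - 2 ≤ p → p ≤ m - 1 →
        a p * (a q * (List.map a s).prod) ∈
          Submodule.span ℚ {y : H | ∃ u : List ℤ, u.Pairwise (· ≤ ·) ∧
            u.length = (l :: s).length + 1 ∧
            (∀ x : ℤ, strPsi u x ≤ strPsi (m :: l :: s) x) ∧ y = (u.map a).prod} := by
      intro p q hsum hq1 hq2 hp1 hp2
      have hq : strPsi s q ≤ N := by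
        have := strPsi_mono s (show q ≤ m + 2 by omega)
        omega
      have step1 := IH q s hs hq
      have main2 : ∀ y ∈ Submodule.span ℚ {y : H | ∃ u : List ℤ, u.Pairwise (· ≤ ·) ∧
            u.length = s.length + 1 ∧ (∀ x : ℤ, strPsi u x ≤ strPsi (q :: s) x) ∧
            y = (u.map a).prod},
          a p * y ∈ Submodule.span ℚ {y : H | ∃ u : List ℤ, u.Pairwise (· ≤ ·) ∧
            u.length = (l :: s).length + 1 ∧
            (∀ x : ℤ, strPsi u x ≤ strPsi (m :: l :: s) x) ∧ y = (u.map a).prod} := by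
        intro y hy
        induction hy using Submodule.span_induction with
        | mem y hy =>
          obtain ⟨u', hu's, hu'len, hu'psi, rfl⟩ := hy
          have hpu : strPsi u' p ≤ N := by
            have h1 := hu'psi p
            have hmo := strPsi_mono s (show p + 2 ≤ m + 2 by omega)
            simp only [strPsi] at h1
            omega
          have h4 := IH p u' hu's hpu
          refine Submodule.span_mono ?_ h4
          rintro z ⟨u, hus, hulen, hupsi, rfl⟩
          refine ⟨u, hus, by simp [hulen, hu'len], ?_, rfl⟩
          intro x
          have h5 := hupsi x
          have h6 := hu'psi (x + 2)
          simp only [strPsi] at h5 h6 ⊢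
          omega
        | zero => simp
        | add y z hy hz ihy ihz => rw [mul_add]; exact Submodule.add_mem _ ihy ihz
        | smul c y hy ih => rw [mul_smul_comm]; exact Submodule.smul_mem _ _ ih
      exact main2 _ step1
    simp only [List.map_cons, List.prod_cons]
    rw [expand]
    refine Submodule.sub_mem _ (Submodule.add_mem _ ?_ (Submodule.smul_mem _ _ ?_))
      (Submodule.smul_mem _ _ ?_)
    · exact hpair (l - 2) (m + 2) (by ring) le_rfl (by omega) (by omega) (by omega)
    · exact hpair (m - 1) (l + 1) (by ring) (by omega) (by omega) (by omega) (by omega)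
    · exact hpair (l - 1) (m + 1) (by ring) (by omega) (by omega) (by omega) (by omega)

theorem str_list
    (hrel : ∀ n l : ℤ,
      ((n : ℚ) - l + 2) • (a (n - 1) * a (l + 1) - a (l - 1) * a (n + 1)) =
        ((n : ℚ) - l) • (a n * a l - a (l - 2) * a (n + 2))) :
    ∀ L : List ℤ, (L.map a).prod ∈
      Submodule.span ℚ {y : H | ∃ u : List ℤ, u.Pairwise (· ≤ ·) ∧ u.length = L.length ∧
        y = (u.map a).prod} := by
  intro L
  induction L with
  | nil => exact Submodule.subset_span ⟨[], by simp, rfl, by simp⟩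
  | cons n L IHL =>
    rw [List.map_cons, List.prod_cons]
    have main2 : ∀ y ∈ Submodule.span ℚ {y : H | ∃ u : List ℤ, u.Pairwise (· ≤ ·) ∧
          u.length = L.length ∧ y = (u.map a).prod},
        a n * y ∈ Submodule.span ℚ {y : H | ∃ u : List ℤ, u.Pairwise (· ≤ ·) ∧
          u.length = (n :: L).length ∧ y = (u.map a).prod} := by
      intro y hy
      induction hy using Submodule.span_induction with
      | mem y hy =>
        obtain ⟨u, hu, hlen, rfl⟩ := hy
        have hk := str_key a hrel (strPsi u n) n u hu le_rfl
        refine Submodule.span_mono ?_ hk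
        rintro z ⟨v, hv, hvlen, _, rfl⟩
        exact ⟨v, hv, by simp [hvlen, hlen], rfl⟩
      | zero => simp
      | add y z hy hz ihy ihz => rw [mul_add]; exact Submodule.add_mem _ ihy ihz
      | smul c y hy ih => rw [mul_smul_comm]; exact Submodule.smul_mem _ _ ih
    exact main2 _ IHL

end Key

/-- Let `H` be an associative `ℚ`-algebra with elements
`a n = 1_{(1,n)}` for `n ∈ ℤ` satisfying, for all `n, l ∈ ℤ`,
`(n−l+2)(a(n−1)a(l+1) − a(l−1)a(n+1)) = (n−l)(a(n)a(l) − a(l−2)a(n+2))`.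
Then every product `a n₁ ⋯ a n_r` is a `ℚ`-linear combination of ordered
products `a l₁ ⋯ a l_r` with `l₁ ≤ l₂ ≤ ⋯ ≤ l_r`. -/
theorem straightening
    (H : Type*) [Ring H] [Algebra ℚ H] (a : ℤ → H)
    (hrel : ∀ n l : ℤ,
      ((n : ℚ) - l + 2) • (a (n - 1) * a (l + 1) - a (l - 1) * a (n + 1)) =
        ((n : ℚ) - l) • (a n * a l - a (l - 2) * a (n + 2)))
    (r : ℕ) (nn : Fin r → ℤ) :
    (List.ofFn fun i => a (nn i)).prod ∈
      Submodule.span ℚ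
        {x : H | ∃ ll : Fin r → ℤ, Monotone ll ∧ x = (List.ofFn fun i => a (ll i)).prod} := by
  have h := str_list a hrel (List.ofFn nn)
  have hprod : (List.ofFn fun i => a (nn i)).prod = ((List.ofFn nn).map a).prod := by
    rw [List.map_ofFn]; rfl
  rw [hprod]
  refine Submodule.span_mono ?_ h
  rintro z ⟨u, hu, hlen, rfl⟩
  have hlen' : u.length = r := by simpa using hlen
  refine ⟨fun i => u.get (Fin.cast hlen'.symm i), ?_, ?_⟩
  · have : (List.ofFn fun i : Fin r => u.get (Fin.cast hlen'.symm i)).Pairwise (· ≤ ·) := by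
      rw [strOfFn_cast u hlen']; exact hu
    exact List.sortedLE_ofFn_iff.mp (List.sortedLE_iff_pairwise.mpr this)
  · have : (List.ofFn fun i : Fin r => a (u.get (Fin.cast hlen'.symm i))) = u.map a := by
      rw [show (fun i : Fin r => a (u.get (Fin.cast hlen'.symm i))) =
        a ∘ (fun i : Fin r => u.get (Fin.cast hlen'.symm i)) from rfl,
        ← List.map_ofFn, strOfFn_cast u hlen']
    rw [this]
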